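/- Let ā > 0 and let ρ : ℝ → ℝ be twice continuously differentiable, 2π-periodic, with ρ(θ) > 0 for all θ. Let Φ : ℝ² → ℝ satisfy Φ(r cos θ, r sin θ) = ā r² / ρ(θ)² for all r > 0 and θ ∈ ℝ. Then Φ is twice continuously differentiable on ℝ² \ {0}, and for all r > 0 and θ ∈ ℝ the determinant of the Hessian matrix of Φ (i.e. ∂²Φ/∂x₁² · ∂²Φ/∂x₂² − (∂²Φ/∂x₁∂x₂)²) at the point (r cos θ, r sin θ) equals (2ā/ρ(θ)²)² · (ρ(θ)² + 2ρ'(θ)² − ρ(θ)ρ''(θ))/ρ(θ)². -/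

import Mathlib

open Real

/-- First partial derivative (with respect to the first coordinate) of a
function on the plane `ℝ × ℝ`. -/
noncomputable def pderiv1 (f : ℝ × ℝ → ℝ) : ℝ × ℝ → ℝ :=
  fun p => deriv (fun u => f (u, p.2)) p.1

/-- First partial derivative (with respect to the second coordinate) of a
function on the plane `ℝ × ℝ`. -/
noncomputable def pderiv2 (f : ℝ × ℝ → ℝ) : ℝ × ℝ → ℝ :=
  fun p => deriv (fun u => f (p.1, u)) p.2

/-- Determinant of the Hessian matrix of second partial derivatives. -/
noncomputable def hessianDet (f : ℝ × ℝ → ℝ) : ℝ × ℝ → ℝ :=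
  fun p => pderiv1 (pderiv1 f) p * pderiv2 (pderiv2 f) p - (pderiv1 (pderiv2 f) p) ^ 2

/-! ### Auxiliary machinery -/

/-- Local angle function adapted to direction `θ₀`. -/
noncomputable def ang (θ₀ : ℝ) (p : ℝ × ℝ) : ℝ :=
  θ₀ + arctan ((cos θ₀ * p.2 - sin θ₀ * p.1) / (cos θ₀ * p.1 + sin θ₀ * p.2))

lemma sq_pos_of_A {c s x y : ℝ} (hcs : c^2 + s^2 = 1) (hA : 0 < c*x + s*y) :
    0 < x^2 + y^2 := by nlinarith [sq_nonneg (c*y - s*x), sq_nonneg (c*x+s*y)]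

lemma hasDerivAt_ang_x (θ₀ x y : ℝ) (hA : 0 < cos θ₀ * x + sin θ₀ * y) :
    HasDerivAt (fun t => ang θ₀ (t, y)) (-y / (x^2 + y^2)) x := by
  set c := cos θ₀; set s := sin θ₀
  have hcs : c^2 + s^2 = 1 := cos_sq_add_sin_sq θ₀
  have hq : 0 < x^2 + y^2 := sq_pos_of_A hcs hA
  have hAne : c*x + s*y ≠ 0 := ne_of_gt hA
  have h1 : HasDerivAt (fun t : ℝ => c*y - s*t) (-s) x := by
    simpa using ((hasDerivAt_id x).const_mul s).const_sub (c*y)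
  have h2 : HasDerivAt (fun t : ℝ => c*t + s*y) c x := by
    simpa using ((hasDerivAt_id x).const_mul c).add_const (s*y)
  have hw : HasDerivAt (fun t : ℝ => (c*y - s*t)/(c*t + s*y))
      ((-s * (c*x+s*y) - (c*y - s*x)*c)/(c*x+s*y)^2) x := h1.div h2 hAne
  have harc := (Real.hasDerivAt_arctan ((c*y - s*x)/(c*x+s*y))).comp x hw
  have : HasDerivAt (fun t => ang θ₀ (t, y))
      (1 / (1 + ((c*y - s*x)/(c*x+s*y))^2) * ((-s * (c*x+s*y) - (c*y - s*x)*c)/(c*x+s*y)^2)) x := by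
    simpa [ang] using harc.const_add θ₀
  convert this using 1
  have h1w : 1 + ((c*y - s*x)/(c*x+s*y))^2 = (x^2+y^2)/(c*x+s*y)^2 := by
    rw [div_pow, one_add_div (pow_ne_zero 2 hAne)]; congr 1
    linear_combination (x^2+y^2)*hcs
  rw [h1w]
  field_simp
  rw [mul_div_cancel_left₀ _ (by linarith : x * c + y * s ≠ 0)]
  linear_combination y*hcs

lemma hasDerivAt_ang_y (θ₀ x y : ℝ) (hA : 0 < cos θ₀ * x + sin θ₀ * y) :
    HasDerivAt (fun t => ang θ₀ (x, t)) (x / (x^2 + y^2)) y := by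
  set c := cos θ₀; set s := sin θ₀
  have hcs : c^2 + s^2 = 1 := cos_sq_add_sin_sq θ₀
  have hq : 0 < x^2 + y^2 := sq_pos_of_A hcs hA
  have hAne : c*x + s*y ≠ 0 := ne_of_gt hA
  have h1 : HasDerivAt (fun t : ℝ => c*t - s*x) c y := by
    simpa using ((hasDerivAt_id y).const_mul c).sub_const (s*x)
  have h2 : HasDerivAt (fun t : ℝ => c*x + s*t) s y := by
    simpa using ((hasDerivAt_id y).const_mul s).const_add (c*x)
  have hw : HasDerivAt (fun t : ℝ => (c*t - s*x)/(c*x + s*t))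
      ((c * (c*x+s*y) - (c*y - s*x)*s)/(c*x+s*y)^2) y := h1.div h2 hAne
  have harc := (Real.hasDerivAt_arctan ((c*y - s*x)/(c*x+s*y))).comp y hw
  have : HasDerivAt (fun t => ang θ₀ (x, t))
      (1 / (1 + ((c*y - s*x)/(c*x+s*y))^2) * ((c * (c*x+s*y) - (c*y - s*x)*s)/(c*x+s*y)^2)) y := by
    simpa [ang] using harc.const_add θ₀
  convert this using 1
  have h1w : 1 + ((c*y - s*x)/(c*x+s*y))^2 = (x^2+y^2)/(c*x+s*y)^2 := by
    rw [div_pow, one_add_div (pow_ne_zero 2 hAne)]; congr 1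
    linear_combination (x^2+y^2)*hcs
  rw [h1w]
  field_simp
  rw [mul_div_cancel_left₀ _ (by linarith : x * c + y * s ≠ 0)]
  linear_combination (-x)*hcs

noncomputable def gg (a : ℝ) (ρ : ℝ → ℝ) (t : ℝ) : ℝ := a / ρ t ^ 2
noncomputable def gg1 (a : ℝ) (ρ : ℝ → ℝ) (t : ℝ) : ℝ := -2 * a * deriv ρ t / ρ t ^ 3
noncomputable def gg2 (a : ℝ) (ρ : ℝ → ℝ) (t : ℝ) : ℝ :=
  (6 * a * deriv ρ t ^ 2 - 2 * a * ρ t * deriv (deriv ρ) t) / ρ t ^ 4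

lemma contDiff_gg {a : ℝ} {ρ : ℝ → ℝ} (hρ : ContDiff ℝ 2 ρ) (hpos : ∀ t, 0 < ρ t) :
    ContDiff ℝ 2 (gg a ρ) :=
  contDiff_const.div (hρ.pow 2) (fun t => pow_ne_zero 2 (hpos t).ne')

lemma hasDerivAt_gg {a : ℝ} {ρ : ℝ → ℝ} (hρ : ContDiff ℝ 2 ρ) (hpos : ∀ t, 0 < ρ t) (t : ℝ) :
    HasDerivAt (gg a ρ) (gg1 a ρ t) t := by
  have hρd : HasDerivAt ρ (deriv ρ t) t :=
    ((hρ.differentiable (by norm_num)) t).hasDerivAt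
  have h := (hasDerivAt_const t a).fun_div (hρd.fun_pow 2) (pow_ne_zero 2 (hpos t).ne')
  refine h.congr_deriv ?_
  have := (hpos t).ne'
  unfold gg1; field_simp
  ring

lemma hasDerivAt_gg1 {a : ℝ} {ρ : ℝ → ℝ} (hρ : ContDiff ℝ 2 ρ) (hpos : ∀ t, 0 < ρ t) (t : ℝ) :
    HasDerivAt (gg1 a ρ) (gg2 a ρ t) t := by
  have h2 : ContDiff ℝ (1+1) ρ := by exact_mod_cast hρ
  have hd1 : Differentiable ℝ (deriv ρ) :=
    ((contDiff_succ_iff_deriv.mp h2).2.2).differentiable (by norm_num)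
  have hρd : HasDerivAt ρ (deriv ρ t) t :=
    ((hρ.differentiable (by norm_num)) t).hasDerivAt
  have hρdd : HasDerivAt (deriv ρ) (deriv (deriv ρ) t) t := (hd1 t).hasDerivAt
  have h := (hρdd.const_mul (-2*a)).fun_div (hρd.fun_pow 3) (pow_ne_zero 3 (hpos t).ne')
  refine h.congr_deriv ?_
  have := (hpos t).ne'
  unfold gg2; field_simp
  ring

noncomputable def FF (a : ℝ) (ρ : ℝ → ℝ) (θ₀ : ℝ) (p : ℝ × ℝ) : ℝ :=
  (p.1^2 + p.2^2) * gg a ρ (ang θ₀ p)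
noncomputable def FFx (a : ℝ) (ρ : ℝ → ℝ) (θ₀ : ℝ) (p : ℝ × ℝ) : ℝ :=
  2*p.1 * gg a ρ (ang θ₀ p) - p.2 * gg1 a ρ (ang θ₀ p)
noncomputable def FFy (a : ℝ) (ρ : ℝ → ℝ) (θ₀ : ℝ) (p : ℝ × ℝ) : ℝ :=
  2*p.2 * gg a ρ (ang θ₀ p) + p.1 * gg1 a ρ (ang θ₀ p)

section
variable {a : ℝ} {ρ : ℝ → ℝ}
variable (hρ : ContDiff ℝ 2 ρ) (hpos : ∀ t, 0 < ρ t) (θ₀ x y : ℝ)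
  (hA : 0 < cos θ₀ * x + sin θ₀ * y)
include hρ hpos hA

lemma hasDerivAt_FF_x :
    HasDerivAt (fun t => FF a ρ θ₀ (t, y)) (FFx a ρ θ₀ (x, y)) x := by
  have hq : 0 < x^2 + y^2 := sq_pos_of_A (cos_sq_add_sin_sq θ₀) hA
  have hg := (hasDerivAt_gg (a := a) hρ hpos (ang θ₀ (x,y))).comp x (hasDerivAt_ang_x θ₀ x y hA)
  have hr : HasDerivAt (fun t : ℝ => t^2 + y^2) (2*x) x := by
    simpa using (hasDerivAt_pow 2 x).add_const (y^2)
  have h := hr.fun_mul hg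
  refine h.congr_deriv ?_
  simp only [FFx, Function.comp]
  field_simp
  ring

lemma hasDerivAt_FF_y :
    HasDerivAt (fun t => FF a ρ θ₀ (x, t)) (FFy a ρ θ₀ (x, y)) y := by
  have hq : 0 < x^2 + y^2 := sq_pos_of_A (cos_sq_add_sin_sq θ₀) hA
  have hg := (hasDerivAt_gg (a := a) hρ hpos (ang θ₀ (x,y))).comp y (hasDerivAt_ang_y θ₀ x y hA)
  have hr : HasDerivAt (fun t : ℝ => x^2 + t^2) (2*y) y := by
    simpa using (hasDerivAt_pow 2 y).const_add (x^2)
  have h := hr.fun_mul hg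
  refine h.congr_deriv ?_
  simp only [FFy, Function.comp]
  field_simp

lemma hasDerivAt_FFx_x :
    HasDerivAt (fun t => FFx a ρ θ₀ (t, y))
      (2 * gg a ρ (ang θ₀ (x,y))
        + (-(2*x*y) * gg1 a ρ (ang θ₀ (x,y)) + y^2 * gg2 a ρ (ang θ₀ (x,y))) / (x^2+y^2)) x := by
  have hq : 0 < x^2 + y^2 := sq_pos_of_A (cos_sq_add_sin_sq θ₀) hA
  have hg := (hasDerivAt_gg (a := a) hρ hpos (ang θ₀ (x,y))).comp x (hasDerivAt_ang_x θ₀ x y hA)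
  have hg1 := (hasDerivAt_gg1 (a := a) hρ hpos (ang θ₀ (x,y))).comp x (hasDerivAt_ang_x θ₀ x y hA)
  have hlin : HasDerivAt (fun t : ℝ => 2*t) 2 x := by simpa using (hasDerivAt_id x).const_mul 2
  have h := (hlin.fun_mul hg).sub ((hg1.const_mul y))
  refine h.congr_deriv ?_
  simp only [Function.comp]
  field_simp
  ring

lemma hasDerivAt_FFy_x :
    HasDerivAt (fun t => FFy a ρ θ₀ (t, y))
      ((-(2*y^2) * gg1 a ρ (ang θ₀ (x,y)) - x*y * gg2 a ρ (ang θ₀ (x,y))) / (x^2+y^2)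
        + gg1 a ρ (ang θ₀ (x,y))) x := by
  have hq : 0 < x^2 + y^2 := sq_pos_of_A (cos_sq_add_sin_sq θ₀) hA
  have hg := (hasDerivAt_gg (a := a) hρ hpos (ang θ₀ (x,y))).comp x (hasDerivAt_ang_x θ₀ x y hA)
  have hg1 := (hasDerivAt_gg1 (a := a) hρ hpos (ang θ₀ (x,y))).comp x (hasDerivAt_ang_x θ₀ x y hA)
  have h := (hg.const_mul (2*y)).add ((hasDerivAt_id x).fun_mul hg1)
  refine h.congr_deriv ?_
  simp only [Function.comp, id]
  field_simp
  ring

lemma hasDerivAt_FFy_y :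
    HasDerivAt (fun t => FFy a ρ θ₀ (x, t))
      (2 * gg a ρ (ang θ₀ (x,y))
        + (2*x*y * gg1 a ρ (ang θ₀ (x,y)) + x^2 * gg2 a ρ (ang θ₀ (x,y))) / (x^2+y^2)) y := by
  have hq : 0 < x^2 + y^2 := sq_pos_of_A (cos_sq_add_sin_sq θ₀) hA
  have hg := (hasDerivAt_gg (a := a) hρ hpos (ang θ₀ (x,y))).comp y (hasDerivAt_ang_y θ₀ x y hA)
  have hg1 := (hasDerivAt_gg1 (a := a) hρ hpos (ang θ₀ (x,y))).comp y (hasDerivAt_ang_y θ₀ x y hA)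
  have hlin : HasDerivAt (fun t : ℝ => 2*t) 2 y := by simpa using (hasDerivAt_id y).const_mul 2
  have h := (hlin.fun_mul hg).add (hg1.const_mul x)
  refine h.congr_deriv ?_
  simp only [Function.comp]
  field_simp
  ring

end

lemma cos_sin_ang (θ₀ x y : ℝ) (hA : 0 < cos θ₀ * x + sin θ₀ * y) :
    Real.sqrt (x^2+y^2) * cos (ang θ₀ (x,y)) = x ∧
    Real.sqrt (x^2+y^2) * sin (ang θ₀ (x,y)) = y := by
  set c := cos θ₀ with hc; set s := sin θ₀ with hs
  have hcs : c^2 + s^2 = 1 := cos_sq_add_sin_sq θ₀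
  have hq : 0 < x^2 + y^2 := sq_pos_of_A hcs hA
  set A := c*x + s*y with hAdef
  set B := c*y - s*x with hBdef
  set t := B / A with ht
  have hsq : 0 < Real.sqrt (x^2+y^2) := Real.sqrt_pos.mpr hq
  have h1t : 1 + t^2 = (x^2+y^2) / A^2 := by
    rw [ht]
    field_simp
    linear_combination (x^2+y^2)*hcs
  have hst : Real.sqrt (1 + t^2) = Real.sqrt (x^2+y^2) / A := by
    rw [h1t, Real.sqrt_div hq.le, Real.sqrt_sq hA.le]
  have hcosarc : cos (arctan t) = A / Real.sqrt (x^2+y^2) := by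
    rw [Real.cos_arctan, hst]
    field_simp
  have hsinarc : sin (arctan t) = B / Real.sqrt (x^2+y^2) := by
    rw [Real.sin_arctan, hst, ht]
    field_simp
  have hang : ang θ₀ (x,y) = θ₀ + arctan t := rfl
  constructor
  · rw [hang, cos_add, ← hc, ← hs, hcosarc, hsinarc]
    field_simp
    linear_combination x * hcs
  · rw [hang, sin_add, ← hc, ← hs, hcosarc, hsinarc]
    field_simp
    linear_combination y * hcs

lemma Phi_eq {a : ℝ} {ρ : ℝ → ℝ} {Φ : ℝ × ℝ → ℝ}
    (hΦ : ∀ r : ℝ, 0 < r → ∀ θ : ℝ, Φ (r * cos θ, r * sin θ) = a * r ^ 2 / ρ θ ^ 2)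
    (θ₀ x y : ℝ) (hA : 0 < cos θ₀ * x + sin θ₀ * y) :
    Φ (x, y) = FF a ρ θ₀ (x, y) := by
  have hq : 0 < x^2 + y^2 := sq_pos_of_A (cos_sq_add_sin_sq θ₀) hA
  have hr : 0 < Real.sqrt (x^2+y^2) := Real.sqrt_pos.mpr hq
  obtain ⟨h1, h2⟩ := cos_sin_ang θ₀ x y hA
  have := hΦ (Real.sqrt (x^2+y^2)) hr (ang θ₀ (x,y))
  rw [h1, h2, Real.sq_sqrt hq.le] at this
  rw [this, FF, gg]
  ring

lemma contDiffAt_FF {a : ℝ} {ρ : ℝ → ℝ} (hρ : ContDiff ℝ 2 ρ) (hpos : ∀ t, 0 < ρ t)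
    (θ₀ : ℝ) (p : ℝ × ℝ) (hA : 0 < cos θ₀ * p.1 + sin θ₀ * p.2) :
    ContDiffAt ℝ 2 (FF a ρ θ₀) p := by
  have hden : ContDiffAt ℝ 2 (fun q : ℝ × ℝ => cos θ₀ * q.1 + sin θ₀ * q.2) p := by fun_prop
  have hnum : ContDiffAt ℝ 2 (fun q : ℝ × ℝ => cos θ₀ * q.2 - sin θ₀ * q.1) p := by fun_prop
  have hratio := hnum.div hden (ne_of_gt hA)
  have hang : ContDiffAt ℝ 2 (ang θ₀) p :=
    contDiffAt_const.add ((Real.contDiff_arctan.contDiffAt).comp p hratio)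
  have hg : ContDiffAt ℝ 2 (fun q : ℝ × ℝ => gg a ρ (ang θ₀ q)) p :=
    ((contDiff_gg hρ hpos).contDiffAt).comp p hang
  exact (by fun_prop : ContDiffAt ℝ 2 (fun q : ℝ × ℝ => q.1^2 + q.2^2) p).mul hg

lemma det_combine (C S G G1 G2 : ℝ) (h : C^2 + S^2 = 1) :
    (2*G + (-(2*C*S)*G1 + S^2*G2)) * (2*G + (2*C*S*G1 + C^2*G2))
      - ((-(2*S^2)*G1 - C*S*G2) + G1)^2 = 4*G^2 + 2*G*G2 - G1^2 := by
  linear_combination (2*G*G2 - 4*S^2*G1^2 - 2*C*S*G1*G2) * h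

theorem hessian_det_of_polar_weight
    (abar : ℝ) (habar : 0 < abar)
    (ρ : ℝ → ℝ) (hρ : ContDiff ℝ 2 ρ)
    (hper : Function.Periodic ρ (2 * π))
    (hpos : ∀ θ : ℝ, 0 < ρ θ)
    (Φ : ℝ × ℝ → ℝ)
    (hΦ : ∀ r : ℝ, 0 < r → ∀ θ : ℝ,
      Φ (r * cos θ, r * sin θ) = abar * r ^ 2 / ρ θ ^ 2) :
    ContDiffOn ℝ 2 Φ ({(0 : ℝ × ℝ)}ᶜ) ∧
    ∀ r : ℝ, 0 < r → ∀ θ : ℝ,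
      hessianDet Φ (r * cos θ, r * sin θ)
        = (2 * abar / ρ θ ^ 2) ^ 2
            * (ρ θ ^ 2 + 2 * deriv ρ θ ^ 2 - ρ θ * deriv (deriv ρ) θ) / ρ θ ^ 2 := by
  constructor
  · -- smoothness
    intro p hp
    have hp0 : p ≠ 0 := hp
    set z : ℂ := ⟨p.1, p.2⟩ with hz
    have hzne : z ≠ 0 := by
      intro h
      apply hp0
      have h1 : z.re = 0 := by rw [h]; simp
      have h2 : z.im = 0 := by rw [h]; simp
      exact Prod.ext h1 h2
    set θ₀ := z.arg with hθ₀
    have habs : 0 < ‖z‖ := by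
      simpa using norm_pos_iff.mpr hzne
    have hA : 0 < cos θ₀ * p.1 + sin θ₀ * p.2 := by
      rw [hθ₀, Complex.cos_arg hzne, Complex.sin_arg]
      have hre : z.re = p.1 := rfl
      have him : z.im = p.2 := rfl
      rw [hre, him]
      have hq : 0 < p.1^2 + p.2^2 := by
        by_contra hc
        push_neg at hc
        have h1 : p.1 = 0 := by nlinarith [sq_nonneg p.1, sq_nonneg p.2]
        have h2 : p.2 = 0 := by nlinarith [sq_nonneg p.1, sq_nonneg p.2]
        exact hp0 (Prod.ext h1 h2)
      have : p.1 / ‖z‖ * p.1 + p.2 / ‖z‖ * p.2 = (p.1^2 + p.2^2) / ‖z‖ := by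
        field_simp
      rw [this]
      positivity
    have hU : IsOpen {q : ℝ × ℝ | 0 < cos θ₀ * q.1 + sin θ₀ * q.2} :=
      isOpen_lt continuous_const (by fun_prop)
    have hev : Φ =ᶠ[nhds p] FF abar ρ θ₀ := by
      filter_upwards [hU.eventually_mem hA] with q hq
      have := Phi_eq hΦ θ₀ q.1 q.2 hq
      simpa using this
    exact ((contDiffAt_FF hρ hpos θ₀ p hA).congr_of_eventuallyEq hev).contDiffWithinAt
  · -- Hessian determinant
    intro r hr θ
    set c := cos θ with hcdef
    set s := sin θ with hsdef
    have hcs : c^2 + s^2 = 1 := cos_sq_add_sin_sq θ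
    have hρθ : ρ θ ≠ 0 := (hpos θ).ne'
    have hA0 : 0 < c * (r*c) + s * (r*s) := by nlinarith
    -- key pointwise identities for first partials on the half plane
    have key1 : ∀ x y : ℝ, 0 < c*x + s*y → pderiv1 Φ (x, y) = FFx abar ρ θ (x, y) := by
      intro x y hA
      have hopen : IsOpen {t : ℝ | 0 < c*t + s*y} := isOpen_lt continuous_const (by fun_prop)
      have hevx : ∀ᶠ t in nhds x, 0 < c*t + s*y := hopen.eventually_mem hA
      have heq : (fun u => Φ (u, y)) =ᶠ[nhds x] (fun u => FF abar ρ θ (u, y)) := by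
        filter_upwards [hevx] with t ht
        exact Phi_eq hΦ θ t y ht
      show deriv (fun u => Φ (u, y)) x = _
      rw [heq.deriv_eq]
      exact (hasDerivAt_FF_x hρ hpos θ x y hA).deriv
    have key2 : ∀ x y : ℝ, 0 < c*x + s*y → pderiv2 Φ (x, y) = FFy abar ρ θ (x, y) := by
      intro x y hA
      have hopen : IsOpen {t : ℝ | 0 < c*x + s*t} := isOpen_lt continuous_const (by fun_prop)
      have hevy : ∀ᶠ t in nhds y, 0 < c*x + s*t := hopen.eventually_mem hA
      have heq : (fun u => Φ (x, u)) =ᶠ[nhds y] (fun u => FF abar ρ θ (x, u)) := by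
        filter_upwards [hevy] with t ht
        exact Phi_eq hΦ θ x t ht
      show deriv (fun u => Φ (x, u)) y = _
      rw [heq.deriv_eq]
      exact (hasDerivAt_FF_y hρ hpos θ x y hA).deriv
    have hopenx : IsOpen {t : ℝ | 0 < c*t + s*(r*s)} := isOpen_lt continuous_const (by fun_prop)
    have hopeny : IsOpen {t : ℝ | 0 < c*(r*c) + s*t} := isOpen_lt continuous_const (by fun_prop)
    -- second partials at the point
    have hP11 : pderiv1 (pderiv1 Φ) (r*c, r*s)
        = 2 * gg abar ρ (ang θ (r*c, r*s))
          + (-(2*(r*c)*(r*s)) * gg1 abar ρ (ang θ (r*c, r*s))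
             + (r*s)^2 * gg2 abar ρ (ang θ (r*c, r*s))) / ((r*c)^2+(r*s)^2) := by
      have heq : (fun u => pderiv1 Φ (u, r*s)) =ᶠ[nhds (r*c)]
          (fun u => FFx abar ρ θ (u, r*s)) := by
        filter_upwards [hopenx.eventually_mem hA0] with t ht
        exact key1 t (r*s) ht
      show deriv (fun u => pderiv1 Φ (u, r*s)) (r*c) = _
      rw [heq.deriv_eq]
      exact (hasDerivAt_FFx_x hρ hpos θ (r*c) (r*s) hA0).deriv
    have hP22 : pderiv2 (pderiv2 Φ) (r*c, r*s)
        = 2 * gg abar ρ (ang θ (r*c, r*s))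
          + (2*(r*c)*(r*s) * gg1 abar ρ (ang θ (r*c, r*s))
             + (r*c)^2 * gg2 abar ρ (ang θ (r*c, r*s))) / ((r*c)^2+(r*s)^2) := by
      have heq : (fun u => pderiv2 Φ (r*c, u)) =ᶠ[nhds (r*s)]
          (fun u => FFy abar ρ θ (r*c, u)) := by
        filter_upwards [hopeny.eventually_mem hA0] with t ht
        exact key2 (r*c) t ht
      show deriv (fun u => pderiv2 Φ (r*c, u)) (r*s) = _
      rw [heq.deriv_eq]
      exact (hasDerivAt_FFy_y hρ hpos θ (r*c) (r*s) hA0).deriv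
    have hP12 : pderiv1 (pderiv2 Φ) (r*c, r*s)
        = (-(2*(r*s)^2) * gg1 abar ρ (ang θ (r*c, r*s))
            - (r*c)*(r*s) * gg2 abar ρ (ang θ (r*c, r*s))) / ((r*c)^2+(r*s)^2)
          + gg1 abar ρ (ang θ (r*c, r*s)) := by
      have heq : (fun u => pderiv2 Φ (u, r*s)) =ᶠ[nhds (r*c)]
          (fun u => FFy abar ρ θ (u, r*s)) := by
        filter_upwards [hopenx.eventually_mem hA0] with t ht
        exact key2 t (r*s) ht
      show deriv (fun u => pderiv2 Φ (u, r*s)) (r*c) = _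
      rw [heq.deriv_eq]
      exact (hasDerivAt_FFy_x hρ hpos θ (r*c) (r*s) hA0).deriv
    -- the angle at the base point is θ itself
    have hang : ang θ (r*c, r*s) = θ := by
      have : c*(r*s) - s*(r*c) = 0 := by ring
      simp [ang, ← hcdef, ← hsdef, this]
    have hq : (r*c)^2 + (r*s)^2 = r^2 := by linear_combination r^2 * hcs
    have hr2 : (r:ℝ)^2 ≠ 0 := pow_ne_zero 2 hr.ne'
    simp only [hessianDet, ← hcdef, ← hsdef]
    rw [hP11, hP22, hP12, hang, hq]
    have e1 : 2 * gg abar ρ θ + (-(2*(r*c)*(r*s)) * gg1 abar ρ θ + (r*s)^2 * gg2 abar ρ θ) / r^2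
        = 2 * gg abar ρ θ + (-(2*c*s) * gg1 abar ρ θ + s^2 * gg2 abar ρ θ) := by
      field_simp
    have e2 : 2 * gg abar ρ θ + (2*(r*c)*(r*s) * gg1 abar ρ θ + (r*c)^2 * gg2 abar ρ θ) / r^2
        = 2 * gg abar ρ θ + (2*c*s * gg1 abar ρ θ + c^2 * gg2 abar ρ θ) := by
      field_simp
    have e3 : (-(2*(r*s)^2) * gg1 abar ρ θ - (r*c)*(r*s) * gg2 abar ρ θ) / r^2 + gg1 abar ρ θ
        = (-(2*s^2) * gg1 abar ρ θ - c*s * gg2 abar ρ θ) + gg1 abar ρ θ := by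
      field_simp
    rw [e1, e2, e3]
    rw [det_combine c s (gg abar ρ θ) (gg1 abar ρ θ) (gg2 abar ρ θ) hcs]
    rw [gg, gg1, gg2]
    field_simp
    ring
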